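/- arXiv:1601.02060 — 2 statements merged into one kernel-verified Lean document; each statement's English description precedes it below -/
import Mathlib

section
/- For every real k > 0, every d > 0, and all x, x₁, t ∈ ℝ³ with |x − x₁| ≥ d and |t − x₁| ≤ d/2, one has |g(x,t) − g(x,x₁)| ≤ (1 + kd)·|t − x₁|/(π d²). -/
open Real

noncomputable section

/-- The Helmholtz Green's function `g(x,y) = exp(ik|x-y|)/(4π|x-y|)` on ℝ³. -/
def g (k : ℝ) (x y : EuclideanSpace ℝ (Fin 3)) : ℂ :=
  Complex.exp (Complex.I * k * ‖x - y‖) / (4 * π * ‖x - y‖)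

lemma abs_exp_I_mul_sub_one (θ : ℝ) :
    ‖Complex.exp (Complex.I * θ) - 1‖ ≤ |θ| := by
  have hsq : ‖Complex.exp (Complex.I * θ) - 1‖ ^ 2 = 2 - 2 * Real.cos θ := by
    rw [show Complex.I * (θ : ℂ) = (θ : ℂ) * Complex.I by ring, Complex.exp_mul_I,
      Complex.sq_norm]
    simp [Complex.normSq_apply, Complex.cos_ofReal_re, Complex.sin_ofReal_re]
    nlinarith [Real.sin_sq_add_cos_sq θ]
  have hcos := Real.one_sub_sq_div_two_le_cos (x := θ)
  nlinarith [norm_nonneg (Complex.exp (Complex.I * θ) - 1), abs_nonneg θ,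
    sq_abs θ]

/-- for `k > 0`, `d > 0`, `|x − x₁| ≥ d` and `|t − x₁| ≤ d/2`, one has
`|g(x,t) − g(x,x₁)| ≤ (1 + kd)·|t − x₁|/(π d²)`. -/
theorem g_lipschitz_second_arg (k : ℝ) (hk : 0 < k) (d : ℝ) (hd : 0 < d)
    (x x₁ t : EuclideanSpace ℝ (Fin 3)) (hx : d ≤ ‖x - x₁‖) (ht : ‖t - x₁‖ ≤ d / 2) :
    ‖g k x t - g k x x₁‖ ≤ (1 + k * d) * ‖t - x₁‖ / (π * d ^ 2) := by
  set a : ℝ := ‖x - t‖ with ha_def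
  set b : ℝ := ‖x - x₁‖ with hb_def
  set s : ℝ := ‖t - x₁‖ with hs_def
  have hπ : (0 : ℝ) < π := Real.pi_pos
  have hs0 : 0 ≤ s := norm_nonneg _
  have hab : |a - b| ≤ s := by
    have h := abs_norm_sub_norm_le (x - t) (x - x₁)
    have h2 : (x - t) - (x - x₁) = x₁ - t := by abel
    rw [h2] at h
    rw [norm_sub_rev x₁ t] at h
    exact h
  have ha : d / 2 ≤ a := by
    have := abs_le.mp hab
    linarith [this.1]
  have ha0 : (0 : ℝ) < a := by linarith
  have hb0 : (0 : ℝ) < b := by linarith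
  have hπC : ((π : ℝ) : ℂ) ≠ 0 := Complex.ofReal_ne_zero.mpr hπ.ne'
  have haC' : ((a : ℝ) : ℂ) ≠ 0 := Complex.ofReal_ne_zero.mpr ha0.ne'
  have hbC' : ((b : ℝ) : ℂ) ≠ 0 := Complex.ofReal_ne_zero.mpr hb0.ne'
  have haC : (4 * (π : ℂ) * (a : ℂ)) ≠ 0 := by
    simp only [ne_eq, mul_eq_zero]
    push_neg
    exact ⟨⟨by norm_num, hπC⟩, haC'⟩
  have hbC : (4 * (π : ℂ) * (b : ℂ)) ≠ 0 := by
    simp only [ne_eq, mul_eq_zero]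
    push_neg
    exact ⟨⟨by norm_num, hπC⟩, hbC'⟩
  have hEb : ‖Complex.exp (Complex.I * k * b)‖ = 1 := by
    rw [Complex.norm_exp]
    norm_num [Complex.mul_re]
  -- decomposition
  have hdecomp : g k x t - g k x x₁ =
      (Complex.exp (Complex.I * k * a) - Complex.exp (Complex.I * k * b)) / (4 * π * a)
      + Complex.exp (Complex.I * k * b) * ((1 : ℂ) / (4 * π * a) - 1 / (4 * π * b)) := by
    rw [g, g, ← ha_def, ← hb_def]
    field_simp
    ring
  -- first term bound
  have h1 : ‖(Complex.exp (Complex.I * k * a) - Complex.exp (Complex.I * k * b))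
      / (4 * π * a)‖ ≤ k * s / (4 * π * a) := by
    rw [norm_div]
    have hnum : ‖Complex.exp (Complex.I * k * a) - Complex.exp (Complex.I * k * b)‖
        ≤ k * s := by
      have hsplit : Complex.exp (Complex.I * k * a) - Complex.exp (Complex.I * k * b)
          = Complex.exp (Complex.I * k * b) * (Complex.exp (Complex.I * (k * (a - b))) - 1) := by
        rw [mul_sub, ← Complex.exp_add]
        push_cast
        ring_nf
      rw [hsplit, norm_mul, hEb, one_mul]
      calc ‖Complex.exp (Complex.I * (k * (a - b))) - 1‖
          ≤ |k * (a - b)| := by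
            have := abs_exp_I_mul_sub_one (k * (a - b))
            simpa using this
        _ = k * |a - b| := by rw [abs_mul, abs_of_pos hk]
        _ ≤ k * s := mul_le_mul_of_nonneg_left hab hk.le
    have hden : ‖4 * (π : ℂ) * (a : ℂ)‖ = 4 * π * a := by
      rw [show (4 : ℂ) * (π : ℂ) * (a : ℂ) = ((4 * π * a : ℝ) : ℂ) by push_cast; ring,
        Complex.norm_real, Real.norm_eq_abs]
      exact abs_of_pos (by positivity)
    rw [hden]
    gcongr
  -- second term bound
  have h2 : ‖Complex.exp (Complex.I * k * b) * ((1 : ℂ) / (4 * π * a) - 1 / (4 * π * b))‖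
      ≤ s / (4 * π * a * b) := by
    rw [norm_mul, hEb, one_mul]
    have heq : (1 : ℂ) / (4 * π * a) - 1 / (4 * π * b) = (((b - a) / (4 * π * a * b) : ℝ) : ℂ) := by
      push_cast
      field_simp
    rw [heq, Complex.norm_real, Real.norm_eq_abs, abs_div, abs_of_pos (by positivity : (0:ℝ) < 4 * π * a * b)]
    gcongr
    rw [abs_sub_comm]; exact hab
  have e1 : k * s / (4 * π * a) ≤ k * s / (2 * π * d) := by
    rw [div_le_div_iff₀ (by positivity) (by positivity)]
    nlinarith [mul_nonneg (mul_nonneg (mul_nonneg hk.le hs0) hπ.le)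
      (by linarith : (0:ℝ) ≤ 4 * a - 2 * d)]
  have e2 : s / (4 * π * a * b) ≤ s / (2 * π * d ^ 2) := by
    rw [div_le_div_iff₀ (by positivity) (by positivity)]
    have hab2 : (0:ℝ) ≤ 4 * a * b - 2 * d ^ 2 := by
      nlinarith [mul_nonneg (by linarith : (0:ℝ) ≤ a - d / 2) (by linarith : (0:ℝ) ≤ b - d)]
    nlinarith [mul_nonneg (mul_nonneg hs0 hπ.le) hab2]
  have e3 : k * s / (2 * π * d) + s / (2 * π * d ^ 2) ≤ (1 + k * d) * s / (π * d ^ 2) := by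
    rw [div_add_div _ _ (by positivity) (by positivity),
      div_le_div_iff₀ (by positivity) (by positivity)]
    nlinarith [mul_nonneg (mul_nonneg (mul_nonneg hk.le hs0) (sq_nonneg π))
        (pow_nonneg hd.le 4),
      mul_nonneg (mul_nonneg hs0 (sq_nonneg π)) (pow_nonneg hd.le 3)]
  calc ‖g k x t - g k x x₁‖
      ≤ k * s / (4 * π * a) + s / (4 * π * a * b) := by
        rw [hdecomp]
        exact (norm_add_le _ _).trans (add_le_add h1 h2)
    _ ≤ k * s / (2 * π * d) + s / (2 * π * d ^ 2) := add_le_add e1 e2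
    _ ≤ (1 + k * d) * s / (π * d ^ 2) := e3

end
end

section
/- There is an absolute constant C > 0 such that for every real k > 0, every d > 0, and all x, x₁, t ∈ ℝ³ with |x − x₁| ≥ d and |t − x₁| ≤ d/2, the gradients in the first variable satisfy ‖∇ₓg(x,t) − ∇ₓg(x,x₁)‖ ≤ C·|t − x₁|·(1 + kd + k²d²)/d³. -/
open Real

set_option maxHeartbeats 1000000
set_option synthInstance.maxHeartbeats 200000

noncomputable section

/-- The gradient of `g` in its first variable: the vector in ℂ³ of partial derivatives. -/
def gradg (k : ℝ) (x y : EuclideanSpace ℝ (Fin 3)) : EuclideanSpace ℂ (Fin 3) :=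
  (WithLp.equiv 2 (Fin 3 → ℂ)).symm fun j =>
    fderiv ℝ (fun x' => g k x' y) x (EuclideanSpace.single j 1)

namespace GradgAux

abbrev E3 := EuclideanSpace ℝ (Fin 3)

/-- derivative of the norm on `E3` away from `0`. -/
lemma hasFDerivAt_norm' {u : E3} (hu : u ≠ 0) :
    HasFDerivAt (fun z : E3 => ‖z‖) (‖u‖⁻¹ • (innerSL ℝ u)) u := by
  have hn : (0:ℝ) < ‖u‖ := norm_pos_iff.mpr hu
  have h1 : HasFDerivAt (fun z : E3 => ‖z‖^2)
      (2 • ((innerSL ℝ u).comp (ContinuousLinearMap.id ℝ E3))) u :=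
    (hasFDerivAt_id u).norm_sq
  have h2 : HasDerivAt (fun t => √t) (1/(2*√(‖u‖^2))) (‖u‖^2) :=
    Real.hasDerivAt_sqrt (by positivity)
  have h3 := (h2.hasFDerivAt.comp u h1)
  rw [show ((fun t => √t) ∘ (fun z : E3 => ‖z‖^2)) = fun z : E3 => ‖z‖ from
    funext fun z => Real.sqrt_sq (norm_nonneg z)] at h3
  refine h3.congr_fderiv (Eq.symm ?_)
  ext v
  simp [Real.sqrt_sq hn.le, ContinuousLinearMap.smulRight_apply, Finset.sum_mul, Finset.mul_sum]
  ring

/-- `Hc k z = exp(ikz)/(4πz)`, the holomorphic version of the radial profile. -/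
def Hc (k : ℝ) (z : ℂ) : ℂ := Complex.exp (Complex.I * k * z) / (4 * π * z)

/-- `Psi k z = exp(ikz)(ikz-1)/(4πz³)`, so that `∇ₓ g = Psi(r) (x-y)`. -/
def Psi (k : ℝ) (z : ℂ) : ℂ :=
  Complex.exp (Complex.I * k * z) * (Complex.I * k * z - 1) / (4 * π * z ^ 3)

/-- `Psi' k z` : the derivative of `Psi k`. -/
def Psi' (k : ℝ) (z : ℂ) : ℂ :=
  ((-(k^2) * z * Complex.exp (Complex.I * k * z)) * (4 * π * z ^ 3)
    - Complex.exp (Complex.I * k * z) * (Complex.I * k * z - 1) * (4 * π * (3 * z ^ 2)))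
    / (4 * π * z ^ 3) ^ 2

lemma hasDerivAt_N (k : ℝ) (z : ℂ) :
    HasDerivAt (fun z : ℂ => Complex.exp (Complex.I * k * z) * (Complex.I * k * z - 1))
      (-(k^2) * z * Complex.exp (Complex.I * k * z)) z := by
  have hlin : HasDerivAt (fun z : ℂ => Complex.I * k * z) (Complex.I * k) z := by
    simpa using (hasDerivAt_id z).const_mul (Complex.I * k)
  have hexp := hlin.cexp
  have hlin1 : HasDerivAt (fun z : ℂ => Complex.I * k * z - 1) (Complex.I * k) z :=
    hlin.sub_const 1
  have := hexp.mul hlin1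
  refine this.congr_deriv ?_
  have hI : (Complex.I)^2 = -1 := Complex.I_sq
  ring_nf
  rw [Complex.I_sq]
  ring

lemma hasDerivAt_D (z : ℂ) :
    HasDerivAt (fun z : ℂ => 4 * (π:ℂ) * z ^ 3) (4 * π * (3 * z ^ 2)) z := by
  simpa using ((hasDerivAt_pow 3 z).const_mul (4 * (π:ℂ)))

lemma hasDerivAt_Psi (k : ℝ) {z : ℂ} (hz : z ≠ 0) :
    HasDerivAt (Psi k) (Psi' k z) z := by
  have hD : (4 * (π:ℂ) * z ^ 3) ≠ 0 := by
    have : (π:ℂ) ≠ 0 := Complex.ofReal_ne_zero.mpr Real.pi_ne_zero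
    simp [pow_eq_zero_iff, hz, this]
  exact (hasDerivAt_N k z).div (hasDerivAt_D z) hD

lemma hasDerivAt_Hc (k : ℝ) {z : ℂ} (hz : z ≠ 0) :
    HasDerivAt (Hc k) (Psi k z * z) z := by
  have hD : (4 * (π:ℂ) * z) ≠ 0 := by
    have : (π:ℂ) ≠ 0 := Complex.ofReal_ne_zero.mpr Real.pi_ne_zero
    simp [hz, this]
  have hlin : HasDerivAt (fun z : ℂ => Complex.I * k * z) (Complex.I * k) z := by
    simpa using (hasDerivAt_id z).const_mul (Complex.I * k)
  have hexp := hlin.cexp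
  have hden : HasDerivAt (fun z : ℂ => 4 * (π:ℂ) * z) (4 * π) z := by
    simpa using (hasDerivAt_id z).const_mul (4 * (π:ℂ))
  have h := hexp.div hden hD
  refine h.congr_deriv ?_
  rw [Psi]
  have : (π:ℂ) ≠ 0 := Complex.ofReal_ne_zero.mpr Real.pi_ne_zero
  field_simp

/-- the coordinatewise complexification map, as a continuous linear map. -/
def iota : E3 →L[ℝ] EuclideanSpace ℂ (Fin 3) :=
  LinearMap.toContinuousLinearMap
    { toFun := fun u => (WithLp.equiv 2 (Fin 3 → ℂ)).symm fun j => (u j : ℂ)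
      map_add' := fun u v => by
        ext j; simp
      map_smul' := fun c u => by
        ext j; simp }

@[simp] lemma iota_apply (u : E3) (j : Fin 3) : iota u j = (u j : ℂ) := rfl

lemma norm_iota (u : E3) : ‖iota u‖ = ‖u‖ := by
  rw [EuclideanSpace.norm_eq, EuclideanSpace.norm_eq]
  congr 1
  refine Finset.sum_congr rfl fun j _ => ?_
  simp

lemma norm_iota_le : ‖(iota : E3 →L[ℝ] EuclideanSpace ℂ (Fin 3))‖ ≤ 1 :=
  ContinuousLinearMap.opNorm_le_bound _ zero_le_one fun u => by rw [norm_iota, one_mul]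

/-- `F k x y = Psi(‖x-y‖) • (x-y)` : the closed form of the gradient. -/
def F (k : ℝ) (x y : E3) : EuclideanSpace ℂ (Fin 3) :=
  Psi k (‖x - y‖ : ℝ) • iota (x - y)

/-- identification of `gradg` with the closed form `F`. -/
lemma gradg_eq (k : ℝ) {x y : E3} (hxy : x ≠ y) : gradg k x y = F k x y := by
  have hu : x - y ≠ 0 := sub_ne_zero.mpr hxy
  set u := x - y with hu_def
  have hr : (0:ℝ) < ‖u‖ := norm_pos_iff.mpr hu
  have hmD : HasFDerivAt (fun x' : E3 => ‖x' - y‖)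
      ((‖u‖⁻¹ • innerSL ℝ u).comp (ContinuousLinearMap.id ℝ E3)) x := by
    have := (hasFDerivAt_norm' hu).comp x ((hasFDerivAt_id x).sub_const y)
    exact this
  have hrC : ((‖u‖ : ℝ) : ℂ) ≠ 0 := Complex.ofReal_ne_zero.mpr hr.ne'
  have hsc : HasDerivAt (fun s : ℝ => Hc k s) (Psi k (‖u‖:ℝ) * (‖u‖:ℝ)) ‖u‖ :=
    (hasDerivAt_Hc k hrC).comp_ofReal
  have hG : HasFDerivAt (fun x' : E3 => g k x' y)
      ((ContinuousLinearMap.smulRight (1 : ℝ →L[ℝ] ℝ) (Psi k (‖u‖:ℝ) * (‖u‖:ℝ))).comp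
        ((‖u‖⁻¹ • innerSL ℝ u).comp (ContinuousLinearMap.id ℝ E3))) x := by
    have := hsc.hasFDerivAt.comp x hmD
    exact this
  unfold gradg
  unfold F
  ext j
  rw [hG.fderiv]
  simp only [WithLp.equiv_symm_apply, PiLp.toLp_apply, ContinuousLinearMap.coe_comp', Function.comp_apply,
    ContinuousLinearMap.coe_id', id_eq, ContinuousLinearMap.smulRight_apply,
    ContinuousLinearMap.one_apply, ContinuousLinearMap.coe_smul', Pi.smul_apply,
    innerSL_apply_apply, smul_eq_mul]
  have hinner : (inner ℝ u (EuclideanSpace.single j (1:ℝ)) : ℝ) = u j := by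
    rw [EuclideanSpace.inner_single_right]; simp
  rw [hinner]
  have : (Psi k (‖u‖:ℝ) • iota u) j = Psi k (‖u‖:ℝ) * (u j : ℂ) := by
    simp [iota_apply]
  rw [this]
  rw [Complex.real_smul]
  push_cast
  field_simp


lemma norm_exp_IkR (k r : ℝ) : ‖Complex.exp (Complex.I * k * r)‖ = 1 := by
  rw [show Complex.I * (k:ℂ) * (r:ℂ) = ((k*r : ℝ):ℂ) * Complex.I by push_cast; ring]
  rw [Complex.norm_exp_ofReal_mul_I]

lemma norm_den (c r : ℝ) (n : ℕ) (hc : 0 ≤ c) (hr : 0 ≤ r) :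
    ‖(c:ℂ) * (π:ℂ) * (r:ℂ) ^ n‖ = c * π * r ^ n := by
  rw [show (c:ℂ) * (π:ℂ) * (r:ℂ) ^ n = ((c * π * r ^ n : ℝ) : ℂ) by push_cast; ring]
  rw [Complex.norm_real, Real.norm_of_nonneg (by positivity)]

lemma norm_sub_one_le {k r : ℝ} (hk : 0 ≤ k) (hr : 0 ≤ r) :
    ‖Complex.I * (k:ℂ) * (r:ℂ) - 1‖ ≤ k * r + 1 := by
  refine (norm_sub_le _ _).trans ?_
  simp [norm_mul, Complex.norm_real, abs_of_nonneg hk, abs_of_nonneg hr,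
    abs_of_nonneg (mul_nonneg hk hr)]

lemma norm_Psi_le {k r : ℝ} (hk : 0 ≤ k) (hr : 0 < r) :
    ‖Psi k (r:ℂ)‖ ≤ (k*r+1)/(4*π*r^3) := by
  rw [Psi, norm_div, norm_mul, norm_exp_IkR, one_mul,
    show (4:ℂ) * (π:ℂ) * (r:ℂ)^3 = ((4:ℝ):ℂ) * (π:ℂ) * (r:ℂ)^3 by norm_num,
    norm_den 4 r 3 (by norm_num) hr.le]
  gcongr
  exact norm_sub_one_le hk hr.le

lemma norm_Psi'_le {k r : ℝ} (hk : 0 ≤ k) (hr : 0 < r) :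
    ‖Psi' k (r:ℂ)‖ ≤ (k^2*r^2 + 3*(k*r+1))/(4*π*r^4) := by
  have hπ : (0:ℝ) < π := Real.pi_pos
  have h1 : ‖(-((k:ℂ)^2) * (r:ℂ) * Complex.exp (Complex.I * k * r)) * (4 * (π:ℂ) * (r:ℂ) ^ 3)‖
      = k^2*r*(4*π*r^3) := by
    rw [norm_mul, norm_mul, norm_mul, norm_exp_IkR, norm_neg, norm_pow, Complex.norm_real,
      Complex.norm_real, Real.norm_of_nonneg hk, Real.norm_of_nonneg hr.le,
      show (4:ℂ) * (π:ℂ) * (r:ℂ)^3 = ((4:ℝ):ℂ) * (π:ℂ) * (r:ℂ)^3 by norm_num,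
      norm_den 4 r 3 (by norm_num) hr.le]
    ring
  have h2 : ‖Complex.exp (Complex.I * k * r) * (Complex.I * k * r - 1) * (4 * (π:ℂ) * (3 * (r:ℂ) ^ 2))‖
      ≤ (k*r+1)*(12*π*r^2) := by
    rw [norm_mul, norm_mul, norm_exp_IkR, one_mul,
      show (4:ℂ) * (π:ℂ) * (3 * (r:ℂ)^2) = ((12*π*r^2 : ℝ):ℂ) by push_cast; ring,
      Complex.norm_real, Real.norm_of_nonneg (by positivity)]
    have := norm_sub_one_le hk hr.le
    gcongr
  have hden : ‖((4:ℂ) * (π:ℂ) * (r:ℂ) ^ 3) ^ 2‖ = (4*π*r^3)^2 := by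
    rw [norm_pow, show (4:ℂ) * (π:ℂ) * (r:ℂ)^3 = ((4:ℝ):ℂ) * (π:ℂ) * (r:ℂ)^3 by norm_num,
      norm_den 4 r 3 (by norm_num) hr.le]
  rw [Psi', norm_div, hden]
  have hnum := (norm_sub_le (-((k:ℂ)^2) * (r:ℂ) * Complex.exp (Complex.I * k * r) * (4 * (π:ℂ) * (r:ℂ) ^ 3))
    (Complex.exp (Complex.I * k * r) * (Complex.I * k * r - 1) * (4 * (π:ℂ) * (3 * (r:ℂ) ^ 2))))
  calc ‖-((k:ℂ)^2) * (r:ℂ) * Complex.exp (Complex.I * k * r) * (4 * (π:ℂ) * (r:ℂ) ^ 3)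
        - Complex.exp (Complex.I * k * r) * (Complex.I * k * r - 1) * (4 * (π:ℂ) * (3 * (r:ℂ) ^ 2))‖
        / (4*π*r^3)^2
      ≤ (k^2*r*(4*π*r^3) + (k*r+1)*(12*π*r^2)) / (4*π*r^3)^2 := by
        gcongr
        exact hnum.trans (by rw [h1] at *; gcongr)
    _ = (k^2*r^2 + 3*(k*r+1))/(4*π*r^4) := by
        field_simp
        ring

/-- derivative of `y ↦ ‖x - y‖`. -/
def nD (x y : E3) : E3 →L[ℝ] ℝ :=
  (‖x - y‖⁻¹ • innerSL ℝ (x - y)).comp (-(ContinuousLinearMap.id ℝ E3))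

lemma hasFDerivAt_norm_sub {x y : E3} (hu : x - y ≠ 0) :
    HasFDerivAt (fun y' : E3 => ‖x - y'‖) (nD x y) y := by
  have h1 : HasFDerivAt (fun y' : E3 => x - y') (-(ContinuousLinearMap.id ℝ E3)) y := by
    simpa using (hasFDerivAt_id y).const_sub x
  exact (hasFDerivAt_norm' hu).comp y h1

lemma norm_nD_le {x y : E3} (hu : x - y ≠ 0) : ‖nD x y‖ ≤ 1 := by
  refine (ContinuousLinearMap.opNorm_comp_le _ _).trans ?_
  have h1 : ‖‖x - y‖⁻¹ • innerSL ℝ (x - y)‖ ≤ 1 := by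
    rw [norm_smul ‖x - y‖⁻¹ (innerSL ℝ (x - y)), innerSL_apply_norm,
      Real.norm_of_nonneg (inv_nonneg.mpr (norm_nonneg (x - y))),
      inv_mul_cancel₀ (norm_ne_zero_iff.mpr hu)]
  have h2 : ‖-(ContinuousLinearMap.id ℝ E3)‖ ≤ 1 := by
    rw [norm_neg]; exact (ContinuousLinearMap.norm_id_le)
  exact mul_le_one₀ h1 (norm_nonneg _) h2

lemma norm_smulRight_le (A : E3 →L[ℝ] ℂ) (f : EuclideanSpace ℂ (Fin 3)) :
    ‖A.smulRight f‖ ≤ ‖A‖ * ‖f‖ := by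
  refine ContinuousLinearMap.opNorm_le_bound _ (by positivity) fun v => ?_
  rw [ContinuousLinearMap.smulRight_apply, norm_smul (A v) f]
  calc ‖A v‖ * ‖f‖ ≤ (‖A‖ * ‖v‖) * ‖f‖ := by
        have := A.le_opNorm v
        gcongr
    _ = ‖A‖ * ‖f‖ * ‖v‖ := by ring

lemma norm_smulRight_one_le (z : ℂ) :
    ‖ContinuousLinearMap.smulRight (1 : ℝ →L[ℝ] ℝ) z‖ ≤ ‖z‖ := by
  refine ContinuousLinearMap.opNorm_le_bound _ (norm_nonneg z) fun s => ?_
  rw [ContinuousLinearMap.smulRight_apply, ContinuousLinearMap.one_apply, norm_smul s z]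
  rw [mul_comm]

/-- the derivative of `y ↦ F k x y`. -/
def Phi (k : ℝ) (x y : E3) : E3 →L[ℝ] EuclideanSpace ℂ (Fin 3) :=
  Psi k (‖x - y‖ : ℝ) • (-iota) +
    ((ContinuousLinearMap.smulRight (1 : ℝ →L[ℝ] ℝ) (Psi' k (‖x - y‖:ℝ))).comp (nD x y)).smulRight
      (iota (x - y))

lemma hasFDerivAt_F (k : ℝ) {x y : E3} (hu : x - y ≠ 0) :
    HasFDerivAt (fun y' => F k x y') (Phi k x y) y := by
  have hr : (0:ℝ) < ‖x - y‖ := norm_pos_iff.mpr hu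
  have hrC : ((‖x - y‖ : ℝ) : ℂ) ≠ 0 := Complex.ofReal_ne_zero.mpr hr.ne'
  have hc : HasFDerivAt (fun y' : E3 => Psi k (‖x - y'‖ : ℝ))
      ((ContinuousLinearMap.smulRight (1 : ℝ →L[ℝ] ℝ) (Psi' k (‖x - y‖:ℝ))).comp (nD x y)) y := by
    have hp : HasDerivAt (fun s : ℝ => Psi k (s:ℝ)) (Psi' k (‖x - y‖:ℝ)) ‖x - y‖ :=
      (hasDerivAt_Psi k hrC).comp_ofReal
    exact hp.hasFDerivAt.comp y (hasFDerivAt_norm_sub hu)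
  have hf : HasFDerivAt (fun y' : E3 => iota (x - y')) (-iota) y := by
    have h0 : HasFDerivAt (fun y' : E3 => iota x - iota y') (-iota) y := by
      simpa using (iota.hasFDerivAt (x := y)).const_sub (iota x)
    have : (fun y' : E3 => iota x - iota y') = fun y' : E3 => iota (x - y') := by
      funext y'; rw [map_sub]
    rwa [this] at h0
  have := hc.smul hf
  exact this

lemma norm_Phi_le {k : ℝ} (hk : 0 ≤ k) {x y : E3} (hu : x - y ≠ 0) :
    ‖Phi k x y‖ ≤ (k^2*‖x - y‖^2 + 4*(k*‖x - y‖) + 4)/(4*π*‖x - y‖^3) := by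
  have hr : (0:ℝ) < ‖x - y‖ := norm_pos_iff.mpr hu
  set r := ‖x - y‖ with hrdef
  have hπ : (0:ℝ) < π := Real.pi_pos
  set A := (ContinuousLinearMap.smulRight (1 : ℝ →L[ℝ] ℝ) (Psi' k (r:ℝ))).comp (nD x y) with hAdef
  have h1 : ‖Psi k (r:ℝ) • (-iota : E3 →L[ℝ] EuclideanSpace ℂ (Fin 3))‖ ≤ (k*r+1)/(4*π*r^3) := by
    rw [norm_smul (Psi k (r:ℝ)) (-iota : E3 →L[ℝ] EuclideanSpace ℂ (Fin 3)), norm_neg]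
    calc ‖Psi k (r:ℝ)‖ * ‖(iota : E3 →L[ℝ] EuclideanSpace ℂ (Fin 3))‖
        ≤ ((k*r+1)/(4*π*r^3)) * 1 :=
          mul_le_mul (norm_Psi_le hk hr) norm_iota_le (norm_nonneg _) (by positivity)
      _ = (k*r+1)/(4*π*r^3) := by ring
  have hA : ‖A‖ ≤ (k^2*r^2 + 3*(k*r+1))/(4*π*r^4) := by
    refine (ContinuousLinearMap.opNorm_comp_le _ _).trans ?_
    calc ‖ContinuousLinearMap.smulRight (1 : ℝ →L[ℝ] ℝ) (Psi' k (r:ℝ))‖ * ‖nD x y‖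
        ≤ ((k^2*r^2 + 3*(k*r+1))/(4*π*r^4)) * 1 :=
          mul_le_mul ((norm_smulRight_one_le _).trans (norm_Psi'_le hk hr))
            (norm_nD_le hu) (norm_nonneg _) (by positivity)
      _ = (k^2*r^2 + 3*(k*r+1))/(4*π*r^4) := by ring
  have h2 : ‖A.smulRight (iota (x - y))‖ ≤ (k^2*r^2 + 3*(k*r+1))/(4*π*r^4) * r := by
    calc ‖A.smulRight (iota (x - y))‖ ≤ ‖A‖ * ‖iota (x - y)‖ := norm_smulRight_le _ _
      _ ≤ (k^2*r^2 + 3*(k*r+1))/(4*π*r^4) * r := by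
          rw [norm_iota]
          exact mul_le_mul_of_nonneg_right hA hr.le
  have h3 : ‖Phi k x y‖ ≤ ‖Psi k (r:ℝ) • (-iota : E3 →L[ℝ] EuclideanSpace ℂ (Fin 3))‖
      + ‖A.smulRight (iota (x - y))‖ := by
    rw [Phi]
    exact norm_add_le _ _
  refine (h3.trans (add_le_add h1 h2)).trans_eq ?_
  field_simp
  ring

end GradgAux


/-- there is an absolute constant `C > 0` such that for all `k > 0`, `d > 0`,
`|x − x₁| ≥ d`, `|t − x₁| ≤ d/2`, one has
`‖∇ₓg(x,t) − ∇ₓg(x,x₁)‖ ≤ C·|t − x₁|·(1 + kd + k²d²)/d³`. -/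
theorem gradg_diff_estimate :
    ∃ C : ℝ, 0 < C ∧ ∀ (k : ℝ), 0 < k → ∀ (d : ℝ), 0 < d →
      ∀ x x₁ t : EuclideanSpace ℝ (Fin 3), d ≤ ‖x - x₁‖ → ‖t - x₁‖ ≤ d / 2 →
        ‖gradg k x t - gradg k x x₁‖ ≤
          C * ‖t - x₁‖ * (1 + k * d + k ^ 2 * d ^ 2) / d ^ 3 := by
  refine ⟨3, by norm_num, fun k hk d hd x x₁ t hxd htd => ?_⟩
  have hπ : (0:ℝ) < π := Real.pi_pos
  have hpi3 : (3:ℝ) < π := Real.pi_gt_three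
  set s : Set (EuclideanSpace ℝ (Fin 3)) := Metric.closedBall x₁ (d/2) with hs
  have hmemr : ∀ y ∈ s, d/2 ≤ ‖x - y‖ := by
    intro y hy
    have h1 : ‖y - x₁‖ ≤ d/2 := by
      rw [← dist_eq_norm]; exact Metric.mem_closedBall.mp hy
    have h2 : ‖x - x₁‖ ≤ ‖x - y‖ + ‖y - x₁‖ := by
      have := norm_add_le (x - y) (y - x₁)
      simpa using this
    linarith
  have hne : ∀ y ∈ s, x - y ≠ 0 := by
    intro y hy h
    have := hmemr y hy
    rw [h, norm_zero] at this
    linarith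
  set M : ℝ := 3*(1 + k*d + k^2*d^2)/d^3 with hM
  have hbound : ∀ y ∈ s, ‖GradgAux.Phi k x y‖ ≤ M := by
    intro y hy
    have hry : d/2 ≤ ‖x - y‖ := hmemr y hy
    have hr : (0:ℝ) < ‖x - y‖ := lt_of_lt_of_le (by positivity) hry
    refine (GradgAux.norm_Phi_le hk.le (hne y hy)).trans ?_
    set r := ‖x - y‖ with hrdef
    have hsplit : (k^2*r^2 + 4*(k*r) + 4)/(4*π*r^3)
        = k^2/(4*π*r) + k/(π*r^2) + 1/(π*r^3) := by field_simp
    rw [hsplit, hM]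
    have hr2 : (d/2)^2 ≤ r^2 := by gcongr <;> positivity
    have hr3 : (d/2)^3 ≤ r^3 := by gcongr <;> positivity
    have e1 : k^2/(4*π*r) ≤ 3*k^2/d := by
      rw [div_le_div_iff₀ (by positivity) hd]
      have hd12 : d ≤ 12*π*r := by nlinarith
      nlinarith [mul_le_mul_of_nonneg_left hd12 (sq_nonneg k)]
    have e2 : k/(π*r^2) ≤ 3*k/d^2 := by
      rw [div_le_div_iff₀ (by positivity) (by positivity)]
      have hd2 : d^2 ≤ 3*(π*r^2) := by nlinarith
      nlinarith [mul_le_mul_of_nonneg_left hd2 hk.le]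
    have e3 : 1/(π*r^3) ≤ 3/d^3 := by
      rw [div_le_div_iff₀ (by positivity) (by positivity)]
      nlinarith [mul_le_mul_of_nonneg_left hr3 hπ.le,
        mul_pos (by linarith : (0:ℝ) < 3*π-8) (pow_pos hd 3)]
    calc k^2/(4*π*r) + k/(π*r^2) + 1/(π*r^3) ≤ 3*k^2/d + 3*k/d^2 + 3/d^3 :=
          add_le_add (add_le_add e1 e2) e3
      _ = 3*(1 + k*d + k^2*d^2)/d^3 := by field_simp; ring
  have hders : ∀ y ∈ s, HasFDerivWithinAt (fun y' => GradgAux.F k x y') (GradgAux.Phi k x y) s y :=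
    fun y hy => (GradgAux.hasFDerivAt_F k (hne y hy)).hasFDerivWithinAt
  have hx₁s : x₁ ∈ s := Metric.mem_closedBall_self (by positivity)
  have hts : t ∈ s := by rw [hs, Metric.mem_closedBall, dist_eq_norm]; exact htd
  have hmvt := (convex_closedBall x₁ (d/2)).norm_image_sub_le_of_norm_hasFDerivWithin_le
      hders hbound hx₁s hts
  have hxt : x ≠ t := fun h => hne t hts (by rw [h, sub_self])
  have hxx₁ : x ≠ x₁ := fun h => hne x₁ hx₁s (by rw [h, sub_self])
  rw [GradgAux.gradg_eq k hxt, GradgAux.gradg_eq k hxx₁]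
  refine hmvt.trans_eq ?_
  rw [hM]; ring

end
end
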